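/- Let H(x) = x²(−1−r°) + x·ℓ(x)·(−ψ(κ) − (1/2)r°ψ(κ) − r°ψ(κ°)) − ℓ(x)²·((1/2)r°ψ(κ°)ψ(κ)) + γ(x + ℓ(x)ψ(κ)), where ℓ(x) = (γ − (1/2)r°ψ(κ°)x)/(1+r°), γ > 0, r° > 0, ψ(κ°), ψ(κ) ∈ (0,1]. At κ = κ° (i.e. ψ(κ) = ψ(κ°)): (a) x* = γ/(1 + r° + (1/2)r°ψ(κ°)) is a root of H; (b) H(0) ≠ 0 and H(γ/((1/2)r°ψ(κ°))) ≠ 0; (c) H′(x*) < 0, so x* is a simple root. -/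

import Mathlib

/-- at κ = κ° the polynomial H characterizing the mutant's equilibrium
coefficient has x* = γ/(1 + r° + (1/2)r°ψ(κ°)) as a root, no root at 0 or at
γ/((1/2)r°ψ(κ°)), and H′(x*) < 0, so x* is a simple root. -/
theorem H_simple_root (γ r ψ : ℝ) (hγ : 0 < γ) (hr : 0 < r)
    (hψ : ψ ∈ Set.Ioc (0:ℝ) 1)
    (l H : ℝ → ℝ)
    (hl : ∀ x, l x = (γ - (1/2) * r * ψ * x) / (1 + r))
    (hH : ∀ x, H x = x^2 * (-1 - r)
      + x * l x * (-ψ - (1/2) * r * ψ - r * ψ)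
      - (l x)^2 * ((1/2) * r * ψ * ψ)
      + γ * (x + l x * ψ)) :
    H (γ / (1 + r + (1/2) * r * ψ)) = 0 ∧
    H 0 ≠ 0 ∧
    H (γ / ((1/2) * r * ψ)) ≠ 0 ∧
    deriv H (γ / (1 + r + (1/2) * r * ψ)) < 0 := by
  obtain ⟨hψ0, hψ1⟩ := hψ
  have hd : (0:ℝ) < 1 + r := by linarith
  have hc : (0:ℝ) < (1/2) * r * ψ := by positivity
  have hdc : (0:ℝ) < 1 + r - (1/2) * r * ψ := by nlinarith
  have hdpc : (0:ℝ) < 1 + r + (1/2) * r * ψ := by linarith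
  have hdne : (1:ℝ) + r ≠ 0 := ne_of_gt hd
  have hdpcne : (1:ℝ) + r + (1/2) * r * ψ ≠ 0 := ne_of_gt hdpc
  have hcne : ((1:ℝ)/2) * r * ψ ≠ 0 := ne_of_gt hc
  -- explicit polynomial form of H
  set d : ℝ := 1 + r with hdd
  set c : ℝ := (1/2) * r * ψ with hcc
  have Hfun : H = fun x => ((d^2 - c^2) * (c*ψ - d) * x^2
      + γ * (d - c) * ((1-ψ)*d - 2*c*ψ) * x + γ^2 * ψ * (d - c)) / d^2 := by
    funext x
    rw [hH x, hl x]
    field_simp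
    ring
  refine ⟨?_, ?_, ?_, ?_⟩
  · rw [Hfun]
    have : γ / (d + c) * (d + c) = γ := div_mul_cancel₀ γ (by positivity)
    field_simp
    ring
  · have h0 : H 0 = γ^2 * ψ * (d - c) / d^2 := by
      rw [hH 0, hl 0]; field_simp; ring
    rw [h0]
    have : (0:ℝ) < γ^2 * ψ * (d - c) / d^2 := by
      apply div_pos _ (by positivity)
      have : (0:ℝ) < d - c := hdc
      positivity
    exact ne_of_gt this
  · have hval : H (γ/c) = -(γ^2 * (d - c) / c^2) := by
      rw [hH (γ/c), hl (γ/c)]; field_simp; ring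
    rw [hval]
    have : (0:ℝ) < γ^2 * (d - c) / c^2 := by
      apply div_pos _ (by positivity)
      have : (0:ℝ) < d - c := hdc
      positivity
    linarith
  · rw [Hfun]
    set xs : ℝ := γ / (d + c) with hxs
    have hder : HasDerivAt (fun x : ℝ => ((d^2 - c^2) * (c*ψ - d) * x^2
        + γ * (d - c) * ((1-ψ)*d - 2*c*ψ) * x + γ^2 * ψ * (d - c)) / d^2)
        (((d^2 - c^2) * (c*ψ - d) * (2*xs)
          + γ * (d - c) * ((1-ψ)*d - 2*c*ψ)) / d^2) xs := by
      have h1 : HasDerivAt (fun x : ℝ => x^2) (2*xs) xs := by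
        simpa using hasDerivAt_pow 2 xs
      have h2 := ((h1.const_mul ((d^2 - c^2) * (c*ψ - d))).add
        ((hasDerivAt_id xs).const_mul (γ * (d - c) * ((1-ψ)*d - 2*c*ψ)))).add_const
        (γ^2 * ψ * (d - c))
      have h3 := h2.div_const (d^2)
      exact h3.congr_deriv (by ring)
    rw [hder.deriv]
    have hdpc' : (0:ℝ) < d + c := hdpc
    have hval : ((d^2 - c^2) * (c*ψ - d) * (2*xs)
          + γ * (d - c) * ((1-ψ)*d - 2*c*ψ)) / d^2
        = -(γ * (d - c) * (1 + ψ) / d) := by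
      rw [hxs]
      field_simp
      ring
    rw [hval]
    have : (0:ℝ) < γ * (d - c) * (1 + ψ) / d := by
      apply div_pos _ (by positivity)
      have : (0:ℝ) < d - c := hdc
      positivity
    linarith
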